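/- Let U = [[A, B],[C, D]] : X ⊕ U → X^d ⊕ Y be a contractive colligation and set S(z) = D + C(I - Z(z)A)^{-1} Z(z)B for z in the open unit ball B^d of ℂ^d, where Z(z) : X^d → X is the row [z_1 I_X, ..., z_d I_X]. Then S(0) = D, and ‖S(z)‖ ≤ 1 for every z ∈ B^d. -/

import Mathlib

open scoped ENNReal
set_option synthInstance.maxHeartbeats 400000
set_option maxHeartbeats 1000000

instance PiLp.instCompleteSpace' {p : ℝ≥0∞} {ι : Type*} {β : ι → Type*}
    [∀ i, UniformSpace (β i)] [∀ i, CompleteSpace (β i)] : CompleteSpace (PiLp p β) :=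
  (PiLp.uniformEquiv p β).completeSpace_iff.2 (Pi.complete β)

/-- The row operator `Z(z) = [z₁ I_X, …, z_d I_X] : X^d → X`. -/
noncomputable def rowOp {X : Type*} [NormedAddCommGroup X] [NormedSpace ℂ X]
    {d : ℕ} (z : EuclideanSpace ℂ (Fin d)) : PiLp 2 (fun _ : Fin d => X) →L[ℂ] X :=
  ∑ j : Fin d, z j • ((ContinuousLinearMap.proj j : (∀ _ : Fin d, X) →L[ℂ] X).comp
      (PiLp.continuousLinearEquiv 2 ℂ (fun _ : Fin d => X)).toContinuousLinearMap)

lemma rowOp_apply {X : Type*} [NormedAddCommGroup X] [NormedSpace ℂ X]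
    {d : ℕ} (z : EuclideanSpace ℂ (Fin d)) (v : PiLp 2 (fun _ : Fin d => X)) :
    rowOp z v = ∑ j : Fin d, z j • v j := by
  simp [rowOp, ContinuousLinearMap.sum_apply]

lemma rowOp_norm_le {X : Type*} [NormedAddCommGroup X] [NormedSpace ℂ X]
    {d : ℕ} (z : EuclideanSpace ℂ (Fin d)) (v : PiLp 2 (fun _ : Fin d => X)) :
    ‖rowOp z v‖ ≤ ‖z‖ * ‖v‖ := by
  rw [rowOp_apply]
  calc ‖∑ j : Fin d, z j • v j‖ ≤ ∑ j : Fin d, ‖z j‖ * ‖v j‖ := by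
        refine (norm_sum_le _ _).trans ?_
        exact Finset.sum_le_sum fun j _ => (norm_smul _ _).le
    _ ≤ ‖z‖ * ‖v‖ := by
        have h := Finset.sum_mul_sq_le_sq_mul_sq Finset.univ
          (fun j : Fin d => ‖z j‖) (fun j : Fin d => ‖v j‖)
        have hz : ‖z‖ ^ 2 = ∑ j : Fin d, ‖z j‖ ^ 2 := PiLp.norm_sq_eq_of_L2 _ z
        have hv : ‖v‖ ^ 2 = ∑ j : Fin d, ‖v j‖ ^ 2 := PiLp.norm_sq_eq_of_L2 _ v
        have hsum : (0:ℝ) ≤ ∑ j : Fin d, ‖z j‖ * ‖v j‖ :=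
          Finset.sum_nonneg fun j _ => mul_nonneg (norm_nonneg _) (norm_nonneg _)
        nlinarith [norm_nonneg z, norm_nonneg v, mul_nonneg (norm_nonneg z) (norm_nonneg v)]

/-- for a contractive colligation `[[A,B],[C,D]]` the transfer
function `S(z) = D + C(I - Z(z)A)⁻¹Z(z)B` satisfies `S(0) = D` and `‖S(z)‖ ≤ 1`
for every `z` in the open unit ball. -/
theorem contractive_colligation_schur
    {X G Y : Type*}
    [NormedAddCommGroup X] [InnerProductSpace ℂ X] [CompleteSpace X]
    [NormedAddCommGroup G] [InnerProductSpace ℂ G] [CompleteSpace G]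
    [NormedAddCommGroup Y] [InnerProductSpace ℂ Y] [CompleteSpace Y]
    {d : ℕ} (hd : 1 ≤ d)
    (A : X →L[ℂ] PiLp 2 (fun _ : Fin d => X))
    (B : G →L[ℂ] PiLp 2 (fun _ : Fin d => X))
    (C : X →L[ℂ] Y) (D : G →L[ℂ] Y)
    (hcontr : ∀ (x : X) (u : G),
      ‖A x + B u‖ ^ 2 + ‖C x + D u‖ ^ 2 ≤ ‖x‖ ^ 2 + ‖u‖ ^ 2)
    (S : EuclideanSpace ℂ (Fin d) → G →L[ℂ] Y)
    (hS : ∀ z : EuclideanSpace ℂ (Fin d),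
      S z = D + ((C.comp (Ring.inverse (1 - (rowOp z).comp A))).comp (rowOp z)).comp B) :
    S 0 = D ∧ ∀ z : EuclideanSpace ℂ (Fin d), ‖z‖ < 1 → ‖S z‖ ≤ 1 := by
  have hrow0 : (rowOp (0 : EuclideanSpace ℂ (Fin d)) : PiLp 2 (fun _ : Fin d => X) →L[ℂ] X) = 0 := by
    simp [rowOp]
  constructor
  · rw [hS 0, hrow0]
    simp
  · intro z hz
    -- ‖A‖ bound: ‖A x‖ ≤ ‖x‖
    have hA : ∀ x : X, ‖A x‖ ≤ ‖x‖ := by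
      intro x
      have h := hcontr x 0
      simp only [map_zero, add_zero, norm_zero] at h
      nlinarith [norm_nonneg (A x), norm_nonneg (C x), norm_nonneg x, sq_nonneg (‖C x‖)]
    set T : X →L[ℂ] X := (rowOp z).comp A with hT
    have hTnorm : ‖T‖ < 1 := by
      have : ‖T‖ ≤ ‖z‖ := by
        refine ContinuousLinearMap.opNorm_le_bound _ (norm_nonneg z) fun x => ?_
        calc ‖T x‖ = ‖rowOp z (A x)‖ := rfl
          _ ≤ ‖z‖ * ‖A x‖ := rowOp_norm_le z (A x)
          _ ≤ ‖z‖ * ‖x‖ := mul_le_mul_of_nonneg_left (hA x) (norm_nonneg z)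
      linarith
    have hu : IsUnit ((1 : X →L[ℂ] X) - T) := (Units.oneSub T hTnorm).isUnit
    refine ContinuousLinearMap.opNorm_le_bound _ zero_le_one fun u => ?_
    set x : X := Ring.inverse ((1 : X →L[ℂ] X) - T) (rowOp z (B u)) with hxdef
    have hfix : x = rowOp z (A x + B u) := by
      have h1 : ((1 : X →L[ℂ] X) - T) x = rowOp z (B u) := by
        have := Ring.mul_inverse_cancel _ hu
        calc ((1 : X →L[ℂ] X) - T) x
            = (((1 : X →L[ℂ] X) - T) * Ring.inverse ((1 : X →L[ℂ] X) - T)) (rowOp z (B u)) := rfl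
          _ = rowOp z (B u) := by rw [this]; rfl
      have h2 : x - rowOp z (A x) = rowOp z (B u) := by
        simpa [ContinuousLinearMap.sub_apply, hT] using h1
      rw [map_add]
      linear_combination (norm := module) h2
    have hSzu : (S z) u = C x + D u := by
      rw [hS z]
      simp only [ContinuousLinearMap.add_apply, ContinuousLinearMap.comp_apply]
      rw [hxdef, hT, add_comm]
    have hxnorm : ‖x‖ ≤ ‖z‖ * ‖A x + B u‖ := by
      conv_lhs => rw [hfix]
      exact rowOp_norm_le _ _
    have hc := hcontr x u
    rw [hSzu, one_mul]
    have hxle : ‖x‖ ≤ ‖A x + B u‖ :=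
      hxnorm.trans (by nlinarith [norm_nonneg (A x + B u)])
    have hx2 : ‖x‖ ^ 2 ≤ ‖A x + B u‖ ^ 2 := pow_le_pow_left₀ (norm_nonneg x) hxle 2
    have h1 : ‖C x + D u‖ ^ 2 ≤ ‖u‖ ^ 2 := by linarith
    nlinarith [norm_nonneg (C x + D u), norm_nonneg u]
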